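/- For the ultrafilter functor U and a completely distributive lattice V with ξ(𝔵) = ⋀_{A ∈ 𝔵} ⋁A and ⊗ = ∧, the map ξ satisfies: for every ultrafilter 𝔴 on V × V, ⋀_{C ∈ 𝔴} ⋁_{(u,v) ∈ C} (u ∧ v) = (⋀_{A ∈ π₁𝔴} ⋁A) ∧ (⋀_{B ∈ π₂𝔴} ⋁B), where π₁𝔴, π₂𝔴 are the image ultrafilters under the projections; i.e. ξ ∘ U(∧) = ∧ ∘ ⟨ξ∘Uπ₁, ξ∘Uπ₂⟩ on U(V × V). -/

import Mathlib

/-- `r` is totally below `a`. -/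
private def TotBelow {V : Type*} [CompleteLattice V] (r a : V) : Prop :=
  ∀ S : Set V, a ≤ sSup S → ∃ s ∈ S, r ≤ s

/-- In a completely distributive lattice, every element is the sup of the
elements totally below it. -/
private lemma le_iSup_totBelow {V : Type*} [CompletelyDistribLattice V] (a : V) :
    a ≤ ⨆ r : {r : V // TotBelow r a}, (r : V) := by
  have h1 : a ≤ ⨅ S : {S : Set V // a ≤ sSup S}, ⨆ s : (S : Set V), (s : V) := by
    refine le_iInf fun S => ?_
    simpa [sSup_eq_iSup'] using S.2
  have h2 : (⨅ S : {S : Set V // a ≤ sSup S}, ⨆ s : (S : Set V), (s : V))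
      = ⨆ f : (∀ S : {S : Set V // a ≤ sSup S}, (S : Set V)), ⨅ S, ((f S : V)) :=
    iInf_iSup_eq
  refine (h1.trans h2.le).trans (iSup_le fun f => ?_)
  have htb : TotBelow (⨅ S, ((f S : V))) a := by
    intro S hS
    exact ⟨(f ⟨S, hS⟩ : V), (f ⟨S, hS⟩).2, iInf_le _ (⟨S, hS⟩ : {S : Set V // a ≤ sSup S})⟩
  exact le_iSup_of_le (⟨_, htb⟩ : {r : V // TotBelow r a}) le_rfl

/-- For a completely distributive complete lattice `V`, `ξ(𝔵) = ⋀_{A ∈ 𝔵} ⋁A`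
satisfies `ξ ∘ U(∧) = ∧ ∘ ⟨ξ ∘ Uπ₁, ξ ∘ Uπ₂⟩`: for every ultrafilter `𝔴` on `V × V`,
`⋀_{C ∈ 𝔴} ⋁_{(u,v) ∈ C} (u ∧ v)
  = (⋀_{A ∈ π₁𝔴} ⋁A) ⊓ (⋀_{B ∈ π₂𝔴} ⋁B)`. -/
theorem xi_commutes_with_meet {V : Type*} [CompletelyDistribLattice V]
    (w : Ultrafilter (V × V)) :
    (⨅ C ∈ w, ⨆ p ∈ C, (p.1 ⊓ p.2 : V)) =
      (⨅ A ∈ w.map Prod.fst, sSup A) ⊓ (⨅ B ∈ w.map Prod.snd, sSup B) := by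
  apply le_antisymm
  · refine le_inf ?_ ?_
    · refine le_iInf₂ fun A hA => ?_
      have hC : Prod.fst ⁻¹' A ∈ w := hA
      refine (iInf₂_le _ hC).trans (iSup₂_le fun p hp => ?_)
      exact inf_le_left.trans (le_sSup hp)
    · refine le_iInf₂ fun B hB => ?_
      have hC : Prod.snd ⁻¹' B ∈ w := hB
      refine (iInf₂_le _ hC).trans (iSup₂_le fun p hp => ?_)
      exact inf_le_right.trans (le_sSup hp)
  · set a := (⨅ A ∈ w.map Prod.fst, sSup A) ⊓ (⨅ B ∈ w.map Prod.snd, sSup B) with ha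
    refine (le_iSup_totBelow a).trans (iSup_le fun r => ?_)
    obtain ⟨r, hr⟩ := r
    -- `r ≤ p.1` for almost all `p`
    have h1 : {p : V × V | r ≤ p.1} ∈ w := by
      by_contra h
      have hmem : {u : V | ¬ r ≤ u} ∈ w.map Prod.fst := by
        have : Prod.fst ⁻¹' {u : V | ¬ r ≤ u} ∈ w := by
          exact (Ultrafilter.compl_mem_iff_notMem.mpr h)
        exact this
      have hle : a ≤ sSup {u : V | ¬ r ≤ u} :=
        inf_le_left.trans (iInf₂_le _ hmem)
      obtain ⟨s, hs, hrs⟩ := hr _ hle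
      exact hs hrs
    have h2 : {p : V × V | r ≤ p.2} ∈ w := by
      by_contra h
      have hmem : {u : V | ¬ r ≤ u} ∈ w.map Prod.snd := by
        have : Prod.snd ⁻¹' {u : V | ¬ r ≤ u} ∈ w := by
          exact (Ultrafilter.compl_mem_iff_notMem.mpr h)
        exact this
      have hle : a ≤ sSup {u : V | ¬ r ≤ u} :=
        inf_le_right.trans (iInf₂_le _ hmem)
      obtain ⟨s, hs, hrs⟩ := hr _ hle
      exact hs hrs
    refine le_iInf₂ fun C hC => ?_
    obtain ⟨p, hpC, hp1, hp2⟩ :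
        ∃ p, p ∈ C ∧ r ≤ p.1 ∧ r ≤ p.2 := by
      have : C ∩ ({p : V × V | r ≤ p.1} ∩ {p : V × V | r ≤ p.2}) ∈ w :=
        Filter.inter_mem hC (Filter.inter_mem h1 h2)
      obtain ⟨p, hp⟩ := Ultrafilter.nonempty_of_mem this
      exact ⟨p, hp.1, hp.2.1, hp.2.2⟩
    exact le_iSup₂_of_le p hpC (le_inf hp1 hp2)
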